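/- arXiv:2407.01695 — 3 statements merged into one kernel-verified Lean document; each statement's English description precedes it below -/
import Mathlib

section
/- Let X : G → M be continuous and compactly supported. If ∫_G X(g)^* X(g) dμ(g) = 0 (Bochner integral in M), then X(g) = 0 for all g ∈ G. (Faithfulness of Haagerup's operator-valued weight on the Haagerup algebra.) -/
open MeasureTheory
open scoped NNReal ENNReal

/-- Let `X : G → M` be continuous and compactly supported. If
`∫_G X(g)^* X(g) dμ(g) = 0` (a Bochner integral in the complex C*-algebra `M`), then
`X(g) = 0` for all `g ∈ G`. This is the faithfulness of Haagerup's operator-valued weight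
on the Haagerup algebra. Here `G` is a locally compact Hausdorff topological group with
left Haar measure `μ` (in particular `μ` is positive on nonempty open sets). -/
theorem eq_zero_of_integral_star_mul_self_eq_zero
    {G : Type*} [Group G] [TopologicalSpace G] [IsTopologicalGroup G]
    [LocallyCompactSpace G] [T2Space G] [MeasurableSpace G] [BorelSpace G]
    (μ : Measure G) [μ.IsHaarMeasure]
    {M : Type*} [NormedRing M] [StarRing M] [CStarRing M] [NormedAlgebra ℂ M]
    [StarModule ℂ M] [CompleteSpace M]
    (X : G → M) (hXc : Continuous X) (hXs : HasCompactSupport X)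
    (h : ∫ g, star (X g) * X g ∂μ = 0) :
    ∀ g : G, X g = 0 := by
  letI : CStarAlgebra M := {}
  letI := CStarAlgebra.spectralOrder M
  letI := CStarAlgebra.spectralOrderedRing M
  -- nonnegative elements are stable under nonnegative real scalar multiplication
  have hsmul : ∀ (c : ℝ), 0 ≤ c → ∀ {a : M}, 0 ≤ a → 0 ≤ c • a := by
    intro c hc a ha
    rw [StarOrderedRing.nonneg_iff] at ha ⊢
    refine AddSubmonoid.closure_induction (motive := fun x _ => c • x ∈ _) ?_ ?_ ?_ ha
    · rintro x ⟨s, rfl⟩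
      refine AddSubmonoid.subset_closure ⟨Real.sqrt c • s, ?_⟩
      simp only [star_smul, star_trivial, smul_mul_smul_comm, Real.mul_self_sqrt hc]
    · simpa using AddSubmonoid.zero_mem _
    · intro x y _ _ hx hy
      rw [smul_add]; exact AddSubmonoid.add_mem _ hx hy
  -- the nonnegative cone is convex and closed
  have hconv : Convex ℝ {x : M | 0 ≤ x} := fun x hx y hy a b ha hb _ =>
    add_nonneg (hsmul a ha hx) (hsmul b hb hy)
  have hclosed : IsClosed {x : M | 0 ≤ x} := CStarAlgebra.isClosed_nonneg
  -- the Bochner integral of a pointwise nonnegative function w.r.t. a finite measure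
  -- is nonnegative
  have hint : ∀ (ν : Measure G), IsFiniteMeasure ν → ∀ (f : G → M), Integrable f ν →
      (∀ x, 0 ≤ f x) → 0 ≤ ∫ x, f x ∂ν := by
    intro ν hνfin f hfi hfpos
    rcases eq_or_ne ν 0 with rfl | hν
    · simp
    · haveI : NeZero ν := ⟨hν⟩
      have havg : ⨍ x, f x ∂ν ∈ {x : M | 0 ≤ x} :=
        hconv.average_mem hclosed (Filter.Eventually.of_forall fun x => hfpos x) hfi
      have hrepr : ∫ x, f x ∂ν = (ν Set.univ).toReal • ⨍ x, f x ∂ν := by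
        rw [average_eq, ← measureReal_def, smul_inv_smul₀]
        exact ENNReal.toReal_ne_zero.mpr
          ⟨Measure.measure_univ_ne_zero.mpr hν, measure_ne_top _ _⟩
      rw [hrepr]
      exact hsmul _ ENNReal.toReal_nonneg havg
  -- the integrand
  set f : G → M := fun g => star (X g) * X g with hfdef
  have hfc : Continuous f := (continuous_star.comp hXc).mul hXc
  have hfs : HasCompactSupport f := hXs.mul_left
  have hfi : Integrable f μ := hfc.integrable_of_hasCompactSupport hfs
  have hfpos : ∀ g, 0 ≤ f g := fun g => star_mul_self_nonneg _
  intro g₀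
  -- it suffices to show f g₀ = 0
  suffices hf0 : f g₀ = 0 by
    have hnorm := CStarRing.norm_star_mul_self (x := X g₀)
    rw [show star (X g₀) * X g₀ = f g₀ from rfl, hf0, norm_zero] at hnorm
    have : ‖X g₀‖ = 0 := by nlinarith [norm_nonneg (X g₀)]
    simpa [norm_eq_zero] using this
  set K := tsupport f with hKdef
  have hK : IsCompact K := hfs
  have hKfin : μ K ≠ ∞ := hK.measure_lt_top.ne
  -- the integral of f over any finite-measure open set is zero
  have key : ∀ U : Set G, IsOpen U → μ U ≠ ∞ → ∫ g in U, f g ∂μ = 0 := by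
    intro U hU hUfin
    have h1 : 0 ≤ ∫ g in U, f g ∂μ := by
      haveI : IsFiniteMeasure (μ.restrict U) :=
        ⟨by simpa [Measure.restrict_apply_univ] using hUfin.lt_top⟩
      exact hint _ this _ hfi.restrict hfpos
    have h2 : 0 ≤ ∫ g in Uᶜ, f g ∂μ := by
      have heq : ∫ g in Uᶜ, f g ∂μ = ∫ g in Uᶜ ∩ K, f g ∂μ :=
        setIntegral_eq_of_subset_of_forall_diff_eq_zero hU.isClosed_compl.measurableSet
          Set.inter_subset_left
          (fun x hx => image_eq_zero_of_notMem_tsupport (fun hxK => hx.2 ⟨hx.1, hxK⟩))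
      rw [heq]
      haveI : IsFiniteMeasure (μ.restrict (Uᶜ ∩ K)) := by
        refine ⟨?_⟩
        rw [Measure.restrict_apply_univ]
        exact lt_of_le_of_lt (measure_mono Set.inter_subset_right) hK.measure_lt_top
      exact hint _ this _ hfi.restrict hfpos
    have h3 : ∫ g in U, f g ∂μ + ∫ g in Uᶜ, f g ∂μ = 0 := by
      rw [integral_add_compl hU.measurableSet hfi]; exact h
    have hle : ∫ g in U, f g ∂μ ≤ 0 := h3 ▸ le_add_of_nonneg_right h2
    exact le_antisymm hle h1
  -- ε-argument: ‖f g₀‖ ≤ ε for every ε > 0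
  have hnorm : ∀ ε : ℝ, 0 < ε → ‖f g₀‖ ≤ ε := by
    intro ε hε
    obtain ⟨V, hVcomp, hVnhds⟩ := exists_compact_mem_nhds g₀
    set W := {g | ‖f g - f g₀‖ < ε} with hWdef
    have hW : IsOpen W :=
      isOpen_lt (continuous_norm.comp (hfc.sub continuous_const)) continuous_const
    have hgW : g₀ ∈ W := by simp [hWdef, hε]
    set U := W ∩ interior V with hUdef
    have hUopen : IsOpen U := hW.inter isOpen_interior
    have hgU : g₀ ∈ U := ⟨hgW, mem_interior_iff_mem_nhds.mpr hVnhds⟩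
    have hUfin : μ U ≠ ∞ :=
      ((measure_mono (Set.inter_subset_right.trans interior_subset)).trans_lt
        hVcomp.measure_lt_top).ne
    have hUpos : 0 < μ U := hUopen.measure_pos μ ⟨g₀, hgU⟩
    have hI := key U hUopen hUfin
    have hconst : ∫ _ in U, f g₀ ∂μ = (μ U).toReal • f g₀ := by
      simp [setIntegral_const, measureReal_def]
    have hdiff : ∫ g in U, (f g₀ - f g) ∂μ = (μ U).toReal • f g₀ := by
      rw [integral_sub (integrableOn_const (C := f g₀) hUfin) hfi.restrict,
        hI, hconst, sub_zero]
    have hbound : ‖∫ g in U, (f g₀ - f g) ∂μ‖ ≤ ε * (μ U).toReal := by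
      refine norm_setIntegral_le_of_norm_le_const hUfin.lt_top ?_
      intro x hx
      rw [norm_sub_rev]
      exact le_of_lt hx.1
    rw [hdiff, norm_smul, Real.norm_eq_abs,
      abs_of_nonneg ENNReal.toReal_nonneg] at hbound
    have ht : 0 < (μ U).toReal := ENNReal.toReal_pos hUpos.ne' hUfin
    rw [mul_comm (ε : ℝ) _] at hbound
    exact le_of_mul_le_mul_left hbound ht
  have hzero : ‖f g₀‖ ≤ 0 := by
    by_contra hpos
    push_neg at hpos
    have := hnorm (‖f g₀‖ / 2) (by linarith)
    linarith
  simpa [norm_le_zero_iff] using hzero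
end

section
/- The map ρ is multiplicative with respect to the Haagerup product: for all continuous compactly supported X, Y : G → M and all continuous compactly supported ξ : G → H, ρ(X ⋆ Y) ξ = ρ(X)(ρ(Y) ξ) as functions G → H. -/
open MeasureTheory
open scoped NNReal ENNReal CStarAlgebra

/-- The Haagerup product `(X ⋆ Y)(g) = ∫_G α_h(X(g h)) Y(h⁻¹) dμ(h)` (a Bochner integral
in `M`) of functions `X Y : G → M`. -/
noncomputable def haagerupMul {G M : Type*} [Group G] [MeasurableSpace G]
    [NormedRing M] [NormedAlgebra ℂ M] [CompleteSpace M]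
    (μ : Measure G) (α : G →* (M ≃ₐ[ℂ] M)) (X Y : G → M) : G → M :=
  fun g => ∫ h, (α h (X (g * h))) * Y h⁻¹ ∂μ

/-- The representation `ρ` of the Haagerup algebra:
`(ρ(X) ξ)(g) = ∫_G π(α_{g⁻¹ h}(X(h)))(ξ(h⁻¹ g)) dμ(h)`, a Bochner integral in `H`. -/
noncomputable def rhoRep {G M H : Type*} [Group G] [MeasurableSpace G]
    [NormedRing M] [NormedAlgebra ℂ M] [StarRing M] [CompleteSpace M]
    [NormedAddCommGroup H] [InnerProductSpace ℂ H] [CompleteSpace H]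
    (μ : Measure G) (α : G →* (M ≃ₐ[ℂ] M)) (π : M →⋆ₐ[ℂ] (H →L[ℂ] H))
    (X : G → M) (ξ : G → H) : G → H :=
  fun g => ∫ h, π (α (g⁻¹ * h) (X h)) (ξ (h⁻¹ * g)) ∂μ

/-- The map `ρ` is multiplicative with respect to the Haagerup product:
for all continuous compactly supported `X, Y : G → M` and all continuous compactly
supported `ξ : G → H`, `ρ(X ⋆ Y) ξ = ρ(X)(ρ(Y) ξ)` as functions `G → H`. Here `G` is a
locally compact Hausdorff topological group with left Haar measure `μ`, `δ` is the modular
function of `μ`, `M` is a complex C*-algebra with a continuous action `α` of `G` by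
*-automorphisms, `H` is a complex Hilbert space, and `π : M → B(H)` is a *-homomorphism. -/
theorem rhoRep_mul
    {G : Type*} [Group G] [TopologicalSpace G] [IsTopologicalGroup G]
    [LocallyCompactSpace G] [T2Space G] [MeasurableSpace G] [BorelSpace G]
    (μ : Measure G) [μ.IsHaarMeasure]
    {M : Type*} [NormedRing M] [StarRing M] [CStarRing M] [NormedAlgebra ℂ M]
    [StarModule ℂ M] [CompleteSpace M]
    {H : Type*} [NormedAddCommGroup H] [InnerProductSpace ℂ H] [CompleteSpace H]
    (δ : G →* ℝ≥0) (hδcont : Continuous δ)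
    (hδ : ∀ (g : G) (E : Set G), MeasurableSet E →
      μ ((fun x => x * g) '' E) = (δ g : ℝ≥0∞) * μ E)
    (α : G →* (M ≃ₐ[ℂ] M)) (hαstar : ∀ (g : G) (x : M), α g (star x) = star (α g x))
    (hαcont : Continuous fun p : G × M => α p.1 p.2)
    (π : M →⋆ₐ[ℂ] (H →L[ℂ] H))
    (X Y : G → M) (hXc : Continuous X) (hXs : HasCompactSupport X)
    (hYc : Continuous Y) (hYs : HasCompactSupport Y)
    (ξ : G → H) (hξc : Continuous ξ) (hξs : HasCompactSupport ξ) :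
    rhoRep μ α π (haagerupMul μ α X Y) ξ = rhoRep μ α π X (rhoRep μ α π Y ξ) := by
  letI : CStarAlgebra M := ⟨⟩
  have hπcont : Continuous π := map_continuous π
  have hαc : ∀ g : G, Continuous (α g : M → M) :=
    fun g => hαcont.comp (Continuous.prodMk_right g)
  -- bundled continuous linear maps
  let πL : M →L[ℂ] (H →L[ℂ] H) := ⟨π.toAlgHom.toLinearMap, hπcont⟩
  let αL : G → (M →L[ℂ] M) := fun g => ⟨(α g).toLinearMap, hαc g⟩
  let T : G → H → (M →L[ℂ] H) := fun g v =>
    ((ContinuousLinearMap.apply ℂ H v).comp πL).comp (αL g)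
  have hT : ∀ g v m, T g v m = π (α g m) v := fun _ _ _ => rfl
  funext g
  -- the two inner integrands
  set F : G → G → H := fun h k =>
    (π (α (g⁻¹ * (h * k)) (X (h * k)))) ((π (α (g⁻¹ * h) (Y k⁻¹))) (ξ (h⁻¹ * g))) with hF
  set F2 : G → G → H := fun h k =>
    (π (α (g⁻¹ * k) (X k))) ((π (α (g⁻¹ * h) (Y (k⁻¹ * h)))) (ξ (h⁻¹ * g))) with hF2
  -- integrability of the Haagerup integrand
  have hint1 : ∀ h : G, Integrable (fun k => α k (X (h * k)) * Y k⁻¹) μ := by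
    intro h
    have hc : Continuous (fun k => α k (X (h * k)) * Y k⁻¹) :=
      ((hαcont.comp (continuous_id.prodMk (hXc.comp (continuous_mul_left h)))).mul
        (hYc.comp continuous_inv))
    have hs : HasCompactSupport (fun k : G => α k (X (h * k)) * Y k⁻¹) :=
      (hYs.comp_homeomorph (Homeomorph.inv G)).mul_left
    exact hc.integrable_of_hasCompactSupport hs
  -- Step 1: push π and the evaluation at ξ inside the inner integral
  have step1 : ∀ h : G,
      π (α (g⁻¹ * h) (∫ k, α k (X (h * k)) * Y k⁻¹ ∂μ)) (ξ (h⁻¹ * g))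
        = ∫ k, F h k ∂μ := by
    intro h
    have := ((T (g⁻¹ * h) (ξ (h⁻¹ * g))).integral_comp_comm (hint1 h)).symm
    rw [show (T (g⁻¹ * h) (ξ (h⁻¹ * g))) (∫ k, α k (X (h * k)) * Y k⁻¹ ∂μ)
        = π (α (g⁻¹ * h) (∫ k, α k (X (h * k)) * Y k⁻¹ ∂μ)) (ξ (h⁻¹ * g)) from rfl] at this
    rw [this]
    congr 1
    funext k
    rw [hT]
    show π (α (g⁻¹ * h) ((α k) (X (h * k)) * Y k⁻¹)) (ξ (h⁻¹ * g)) = F h k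
    rw [map_mul (α (g⁻¹ * h)), map_mul π, ContinuousLinearMap.mul_apply,
      show (α (g⁻¹ * h)) ((α k) (X (h * k))) = α (g⁻¹ * (h * k)) (X (h * k)) by
        rw [← AlgEquiv.mul_apply, ← map_mul α, mul_assoc]]
  -- Step 2: substitution k ↦ h⁻¹ k in the inner integral
  have step2 : ∀ h : G, ∫ k, F h k ∂μ = ∫ k, F2 h k ∂μ := by
    intro h
    have := integral_mul_left_eq_self (μ := μ) (fun k => F h (h⁻¹ * k)) h
    simp only [inv_mul_cancel_left] at this
    rw [this]
    congr 1
    funext k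
    show F h (h⁻¹ * k) = F2 h k
    simp only [hF, hF2, mul_inv_cancel_left, mul_inv_rev, inv_inv]
  -- continuity of the uncurried F2
  have hF2cont : Continuous (Function.uncurry F2) := by
    have c1 : Continuous fun p : G × G => π (α (g⁻¹ * p.2) (X p.2)) :=
      hπcont.comp (hαcont.comp
        (((continuous_mul_left g⁻¹).comp continuous_snd).prodMk (hXc.comp continuous_snd)))
    have c2 : Continuous fun p : G × G => π (α (g⁻¹ * p.1) (Y (p.2⁻¹ * p.1))) :=
      hπcont.comp (hαcont.comp
        (((continuous_mul_left g⁻¹).comp continuous_fst).prodMk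
          (hYc.comp ((continuous_snd.inv).mul continuous_fst))))
    have c3 : Continuous fun p : G × G => ξ (p.1⁻¹ * g) :=
      hξc.comp ((continuous_fst.inv).mul continuous_const)
    exact isBoundedBilinearMap_apply.continuous.comp
      (c1.prodMk (isBoundedBilinearMap_apply.continuous.comp (c2.prodMk c3)))
  have hF2supp : HasCompactSupport (Function.uncurry F2) := by
    apply HasCompactSupport.intro ((hXs.mul hYs).prod hXs)
    rintro ⟨h, k⟩ hp
    by_cases hX0 : X k = 0
    · simp [Function.uncurry, hF2, hX0]
    by_cases hY0 : Y (k⁻¹ * h) = 0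
    · simp [Function.uncurry, hF2, hY0]
    exfalso
    apply hp
    constructor
    · have : h = k * (k⁻¹ * h) := by group
      rw [this]
      exact Set.mul_mem_mul (subset_tsupport X (by simpa using hX0))
        (subset_tsupport Y (by simpa using hY0))
    · exact subset_tsupport X (by simpa using hX0)
  -- Step 3: Fubini
  have step3 : ∫ h, ∫ k, F2 h k ∂μ ∂μ = ∫ k, ∫ h, F2 h k ∂μ ∂μ :=
    integral_integral_swap_of_hasCompactSupport hF2cont hF2supp
  -- Step 4: for fixed k, identify the inner integral with rhoRep μ α π Y ξ (k⁻¹ * g)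
  have hwint : ∀ k : G, Integrable (fun h => (π (α (g⁻¹ * h) (Y (k⁻¹ * h)))) (ξ (h⁻¹ * g))) μ := by
    intro k
    have hc : Continuous fun h => (π (α (g⁻¹ * h) (Y (k⁻¹ * h)))) (ξ (h⁻¹ * g)) := by
      have c2 : Continuous fun h : G => π (α (g⁻¹ * h) (Y (k⁻¹ * h))) :=
        hπcont.comp (hαcont.comp
          ((continuous_mul_left g⁻¹).prodMk (hYc.comp (continuous_mul_left k⁻¹))))
      have c3 : Continuous fun h : G => ξ (h⁻¹ * g) :=
        hξc.comp (continuous_inv.mul continuous_const)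
      exact isBoundedBilinearMap_apply.continuous.comp (c2.prodMk c3)
    have hs : HasCompactSupport fun h => (π (α (g⁻¹ * h) (Y (k⁻¹ * h)))) (ξ (h⁻¹ * g)) := by
      apply HasCompactSupport.intro (hYs.image (continuous_mul_left k))
      intro h hh
      have hY0 : Y (k⁻¹ * h) = 0 := by
        by_contra hne
        exact hh ⟨k⁻¹ * h, subset_tsupport Y (by simpa using hne), by group⟩
      simp [hY0]
    exact hc.integrable_of_hasCompactSupport hs
  have step4 : ∀ k : G, ∫ h, F2 h k ∂μ
      = (π (α (g⁻¹ * k) (X k))) (rhoRep μ α π Y ξ (k⁻¹ * g)) := by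
    intro k
    rw [show (∫ h, F2 h k ∂μ)
        = ∫ h, (π (α (g⁻¹ * k) (X k))) ((π (α (g⁻¹ * h) (Y (k⁻¹ * h)))) (ξ (h⁻¹ * g))) ∂μ from rfl,
      (π (α (g⁻¹ * k) (X k))).integral_comp_comm (hwint k)]
    congr 1
    have := integral_mul_left_eq_self (μ := μ)
      (fun h => (π (α (g⁻¹ * h) (Y (k⁻¹ * h)))) (ξ (h⁻¹ * g))) k
    simp only [rhoRep]
    rw [← this]
    congr 1
    funext h
    simp only [inv_mul_cancel_left, mul_inv_rev, mul_assoc, inv_inv]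
  calc rhoRep μ α π (haagerupMul μ α X Y) ξ g
      = ∫ h, π (α (g⁻¹ * h) (∫ k, α k (X (h * k)) * Y k⁻¹ ∂μ)) (ξ (h⁻¹ * g)) ∂μ := rfl
    _ = ∫ h, ∫ k, F h k ∂μ ∂μ := by simp only [step1]
    _ = ∫ h, ∫ k, F2 h k ∂μ ∂μ := by simp only [step2]
    _ = ∫ k, ∫ h, F2 h k ∂μ ∂μ := step3
    _ = ∫ k, (π (α (g⁻¹ * k) (X k))) (rhoRep μ α π Y ξ (k⁻¹ * g)) ∂μ := by simp only [step4]
    _ = rhoRep μ α π X (rhoRep μ α π Y ξ) g := rfl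
end

section
/- The map ρ is a *-map: for every continuous compactly supported X : G → M and all continuous compactly supported ξ, η : G → H, ∫_G ⟨(ρ(X^♭) ξ)(g), η(g)⟩ dμ(g) = ∫_G ⟨ξ(g), (ρ(X) η)(g)⟩ dμ(g); that is, ρ(X^♭) is the adjoint of ρ(X) with respect to the L²(G, μ; H) inner product. -/
open MeasureTheory
open scoped NNReal ENNReal InnerProductSpace

/-- The Haagerup involution `X^♭(g) = δ(g⁻¹) • (α_{g⁻¹}(X(g⁻¹)))^*` of a function `X : G → M`. -/
noncomputable def haagerupFlat {G M : Type*} [Group G] [Ring M] [Algebra ℂ M] [StarRing M]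
    (δ : G →* ℝ≥0) (α : G →* (M ≃ₐ[ℂ] M)) (X : G → M) : G → M :=
  fun g => ((δ g⁻¹ : ℝ) : ℂ) • star (α g⁻¹ (X g⁻¹))

private lemma map_mul_right_eq {G : Type*} [Group G] [TopologicalSpace G] [IsTopologicalGroup G]
    [MeasurableSpace G] [BorelSpace G] (μ : Measure G) (δ : G →* ℝ≥0)
    (hδ : ∀ (g : G) (E : Set G), MeasurableSet E →
      μ ((fun x => x * g) '' E) = (δ g : ℝ≥0∞) * μ E) (g : G) :
    Measure.map (fun x => x * g) μ = ((δ g⁻¹ : ℝ≥0) : ℝ≥0∞) • μ := by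
  ext E hE
  rw [Measure.map_apply (measurable_mul_const g) hE, Measure.smul_apply, smul_eq_mul]
  have h1 : (fun x => x * g) ⁻¹' E = (fun x => x * g⁻¹) '' E := by
    ext x
    constructor
    · intro hx
      exact ⟨x * g, hx, by group⟩
    · rintro ⟨y, hy, rfl⟩
      simpa using hy
  rw [h1, hδ g⁻¹ E hE]

private lemma integral_inv_mul_modular {G : Type*} [Group G] [TopologicalSpace G]
    [IsTopologicalGroup G] [LocallyCompactSpace G] [T2Space G] [MeasurableSpace G] [BorelSpace G]
    (μ : Measure G) [μ.IsHaarMeasure] (δ : G →* ℝ≥0) (hδcont : Continuous δ)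
    (hδ : ∀ (g : G) (E : Set G), MeasurableSet E →
      μ ((fun x => x * g) '' E) = (δ g : ℝ≥0∞) * μ E)
    {f : G → ℝ} (hf : Continuous f) (h'f : HasCompactSupport f) :
    ∫ x, ((δ x⁻¹ : ℝ≥0) : ℝ) * f x⁻¹ ∂μ = ∫ x, f x ∂μ := by
  classical
  set w : G → ℝ≥0 := fun x => δ x⁻¹ with hw
  have hwc : Continuous w := hδcont.comp continuous_inv
  have hwm : Measurable w := hwc.measurable
  have hinv_me : MeasurableEmbedding (fun x : G => x⁻¹) :=
    (Homeomorph.inv G).toMeasurableEquiv.measurableEmbedding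
  set ρ : Measure G := μ.withDensity (fun x => ((w x : ℝ≥0) : ℝ≥0∞)) with hρ
  set ν : Measure G := Measure.map (fun x : G => x⁻¹) ρ with hν
  -- integral formula for ν
  have ha : ∀ (φ : G → ℝ), ∫ x, φ x ∂ν = ∫ x, ((w x : ℝ≥0) : ℝ) * φ x⁻¹ ∂μ := by
    intro φ
    rw [hν, hinv_me.integral_map, hρ, integral_withDensity_eq_integral_smul hwm]
    simp [NNReal.smul_def]
  -- right translation invariance of ρ
  have hmapr : ∀ g : G, Measure.map (fun x => x * g) ρ = ρ := by
    intro g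
    ext E hE
    rw [Measure.map_apply (measurable_mul_const g) hE, hρ,
      withDensity_apply _ ((measurable_mul_const g) hE), withDensity_apply _ hE]
    have hEg : ∫⁻ x in E, ((w x : ℝ≥0) : ℝ≥0∞) ∂(Measure.map (fun x => x * g) μ)
        = ∫⁻ x in (fun x => x * g) ⁻¹' E, ((w (x * g) : ℝ≥0) : ℝ≥0∞) ∂μ :=
      setLIntegral_map hE (measurable_coe_nnreal_ennreal.comp hwm) (measurable_mul_const g)
    rw [map_mul_right_eq μ δ hδ g] at hEg
    have hwg : ∀ x : G, ((w (x * g) : ℝ≥0) : ℝ≥0∞) = ((δ g⁻¹ : ℝ≥0) : ℝ≥0∞) * w x := by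
      intro x
      have : w (x * g) = δ g⁻¹ * w x := by
        simp only [hw, mul_inv_rev, map_mul]
      rw [this]
      push_cast
      ring
    simp only [hwg] at hEg
    have hδne : ((δ g⁻¹ : ℝ≥0) : ℝ≥0∞) ≠ 0 := by
      simp only [ne_eq, ENNReal.coe_eq_zero]
      intro h
      have h1 : δ g * δ g⁻¹ = 1 := by rw [← map_mul, mul_inv_cancel, map_one]
      rw [h, mul_zero] at h1
      exact zero_ne_one h1
    have hδnt : ((δ g⁻¹ : ℝ≥0) : ℝ≥0∞) ≠ ⊤ := ENNReal.coe_ne_top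
    rw [setLIntegral_smul_measure, lintegral_const_mul' _ _ hδnt] at hEg
    exact ((ENNReal.mul_right_inj hδne hδnt).mp hEg.symm)
  haveI hνinv : ν.IsMulLeftInvariant := by
    constructor
    intro g
    have h1 : Measure.map (fun x => g * x) ν = Measure.map (fun x : G => x⁻¹)
        (Measure.map (fun x => x * g⁻¹) ρ) := by
      rw [hν, Measure.map_map (measurable_const_mul g) measurable_inv,
        Measure.map_map measurable_inv (measurable_mul_const g⁻¹)]
      congr 1
      funext x
      simp [mul_inv_rev]
    rw [h1, hmapr g⁻¹]
  haveI hνfin : IsFiniteMeasureOnCompacts ν := by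
    constructor
    intro K hK
    have hKm : MeasurableSet K := hK.isClosed.measurableSet
    have h1 : ν K = ρ K⁻¹ := by
      rw [hν, Measure.map_apply measurable_inv hKm, Set.inv_preimage]
    obtain ⟨C, hC⟩ : ∃ C : ℝ≥0, ∀ y ∈ w '' K⁻¹, y ≤ C := by
      obtain ⟨C, hC⟩ := (hK.inv.image hwc).bddAbove
      exact ⟨C, fun y hy => hC hy⟩
    have h2 : ρ K⁻¹ ≤ (C : ℝ≥0∞) * μ K⁻¹ := by
      rw [hρ, withDensity_apply _ hK.inv.isClosed.measurableSet]
      calc ∫⁻ x in K⁻¹, ((w x : ℝ≥0) : ℝ≥0∞) ∂μ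
          ≤ ∫⁻ _ in K⁻¹, (C : ℝ≥0∞) ∂μ := by
            apply setLIntegral_mono measurable_const
            intro x hx
            exact ENNReal.coe_le_coe.2 (hC _ (Set.mem_image_of_mem w hx))
        _ = (C : ℝ≥0∞) * μ K⁻¹ := by rw [setLIntegral_const]
    rw [h1]
    exact lt_of_le_of_lt h2 (ENNReal.mul_lt_top ENNReal.coe_lt_top hK.inv.measure_lt_top)
  set c := Measure.haarScalarFactor ν μ with hc
  have key : ∀ (φ : G → ℝ), Continuous φ → HasCompactSupport φ →
      ∫ x, φ x ∂ν = (c : ℝ) * ∫ x, φ x ∂μ := by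
    intro φ hφc hφs
    rw [Measure.integral_isMulLeftInvariant_eq_smul_of_hasCompactSupport ν μ hφc hφs,
      integral_smul_nnreal_measure]
    simp [NNReal.smul_def]
    exact Or.inl hc.symm
  obtain ⟨g₀, g₀s, g₀nn, g₀pos⟩ : ∃ g : C(G, ℝ), HasCompactSupport g ∧ 0 ≤ g ∧ g 1 ≠ 0 :=
    exists_continuous_nonneg_pos 1
  have hg₀int : 0 < ∫ x, g₀ x ∂μ := by
    apply (integral_pos_iff_support_of_nonneg (fun x => g₀nn x)
      (g₀.continuous.integrable_of_hasCompactSupport g₀s)).2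
    exact g₀.continuous.isOpen_support.measure_pos μ ⟨1, g₀pos⟩
  set T : (G → ℝ) → (G → ℝ) := fun φ x => ((w x : ℝ≥0) : ℝ) * φ x⁻¹ with hT
  have hTc : ∀ φ : G → ℝ, Continuous φ → Continuous (T φ) := fun φ h =>
    (NNReal.continuous_coe.comp hwc).mul (h.comp continuous_inv)
  have hTs : ∀ φ : G → ℝ, HasCompactSupport φ → HasCompactSupport (T φ) := by
    intro φ hφ
    apply HasCompactSupport.intro (hφ.inv : IsCompact (tsupport φ)⁻¹)
    intro x hx
    have : φ x⁻¹ = 0 := image_eq_zero_of_notMem_tsupport (by simpa [Set.mem_inv] using hx)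
    simp [hT, this]
  have hTT : ∀ φ : G → ℝ, T (T φ) = φ := by
    intro φ
    funext x
    simp only [hT, hw, inv_inv]
    rw [← mul_assoc, ← NNReal.coe_mul, ← map_mul, inv_mul_cancel, map_one, NNReal.coe_one, one_mul]
  have e1 : ∫ x, g₀ x ∂μ = (c : ℝ) * ((c : ℝ) * ∫ x, g₀ x ∂μ) := by
    calc ∫ x, g₀ x ∂μ = ∫ x, T (T g₀) x ∂μ := by rw [hTT]
      _ = ∫ x, T g₀ x ∂ν := (ha (T g₀)).symm
      _ = (c : ℝ) * ∫ x, T g₀ x ∂μ := key _ (hTc _ g₀.continuous) (hTs _ g₀s)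
      _ = (c : ℝ) * ∫ x, g₀ x ∂ν := by rw [← ha g₀]
      _ = (c : ℝ) * ((c : ℝ) * ∫ x, g₀ x ∂μ) := by rw [key _ g₀.continuous g₀s]
  have hcsq : (c : ℝ) * (c : ℝ) = 1 := by
    have h2 : ((c : ℝ) * (c : ℝ)) * ∫ x, g₀ x ∂μ = 1 * ∫ x, g₀ x ∂μ := by
      rw [one_mul]; linarith [e1]
    exact mul_right_cancel₀ hg₀int.ne' h2
  have hc1 : (c : ℝ) = 1 := by
    rcases mul_self_eq_one_iff.mp hcsq with h | h
    · exact h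
    · nlinarith [c.coe_nonneg]
  calc ∫ x, ((δ x⁻¹ : ℝ≥0) : ℝ) * f x⁻¹ ∂μ = ∫ x, f x ∂ν := (ha f).symm
    _ = (c : ℝ) * ∫ x, f x ∂μ := key f hf h'f
    _ = ∫ x, f x ∂μ := by rw [hc1, one_mul]

private lemma integral_inv_mul_modular_complex {G : Type*} [Group G] [TopologicalSpace G]
    [IsTopologicalGroup G] [LocallyCompactSpace G] [T2Space G] [MeasurableSpace G] [BorelSpace G]
    (μ : Measure G) [μ.IsHaarMeasure] (δ : G →* ℝ≥0) (hδcont : Continuous δ)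
    (hδ : ∀ (g : G) (E : Set G), MeasurableSet E →
      μ ((fun x => x * g) '' E) = (δ g : ℝ≥0∞) * μ E)
    {f : G → ℂ} (hf : Continuous f) (h'f : HasCompactSupport f) :
    ∫ x, (((δ x⁻¹ : ℝ≥0) : ℝ) : ℂ) * f x⁻¹ ∂μ = ∫ x, f x ∂μ := by
  have hδR : Continuous fun x : G => ((δ x⁻¹ : ℝ≥0) : ℝ) :=
    NNReal.continuous_coe.comp (hδcont.comp continuous_inv)
  have hint2 : Integrable f μ := hf.integrable_of_hasCompactSupport h'f
  have hint1 : Integrable (fun x => (((δ x⁻¹ : ℝ≥0) : ℝ) : ℂ) * f x⁻¹) μ := by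
    apply Continuous.integrable_of_hasCompactSupport
    · exact (Complex.continuous_ofReal.comp hδR).mul (hf.comp continuous_inv)
    · apply HasCompactSupport.intro (h'f.inv : IsCompact (tsupport f)⁻¹)
      intro x hx
      simp [image_eq_zero_of_notMem_tsupport (by simpa [Set.mem_inv] using hx)]
  apply Complex.ext
  · simp only [← RCLike.re_to_complex]
    rw [← integral_re hint1, ← integral_re hint2]
    simp only [RCLike.re_to_complex, Complex.mul_re, Complex.ofReal_re, Complex.ofReal_im,
      zero_mul, sub_zero]
    exact integral_inv_mul_modular μ δ hδcont hδ (Complex.continuous_re.comp hf)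
      (h'f.comp_left (g := Complex.re) rfl)
  · simp only [← RCLike.im_to_complex]
    rw [← integral_im hint1, ← integral_im hint2]
    simp only [RCLike.im_to_complex, Complex.mul_im, Complex.ofReal_re, Complex.ofReal_im,
      zero_mul, add_zero]
    exact integral_inv_mul_modular μ δ hδcont hδ (Complex.continuous_im.comp hf)
      (h'f.comp_left (g := Complex.im) rfl)

/-- The map `ρ` is a *-map: for every continuous compactly supported
`X : G → M` and all continuous compactly supported `ξ, η : G → H`,
`∫_G ⟨(ρ(X^♭) ξ)(g), η(g)⟩ dμ(g) = ∫_G ⟨ξ(g), (ρ(X) η)(g)⟩ dμ(g)`; that is, `ρ(X^♭)` is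
the adjoint of `ρ(X)` with respect to the `L²(G, μ; H)` inner product. Here `G` is a
locally compact Hausdorff topological group with left Haar measure `μ`, `δ` is the modular
function of `μ` (the continuous homomorphism with `μ(E g) = δ(g) μ(E)`), `M` is a complex
C*-algebra with a continuous action `α` of `G` by *-automorphisms, `H` is a complex Hilbert
space, and `π : M → B(H)` is a *-homomorphism. -/
theorem rhoRep_flat_adjoint
    {G : Type*} [Group G] [TopologicalSpace G] [IsTopologicalGroup G]
    [LocallyCompactSpace G] [T2Space G] [MeasurableSpace G] [BorelSpace G]
    (μ : Measure G) [μ.IsHaarMeasure]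
    {M : Type*} [NormedRing M] [StarRing M] [CStarRing M] [NormedAlgebra ℂ M]
    [StarModule ℂ M] [CompleteSpace M]
    {H : Type*} [NormedAddCommGroup H] [InnerProductSpace ℂ H] [CompleteSpace H]
    (δ : G →* ℝ≥0) (hδcont : Continuous δ)
    (hδ : ∀ (g : G) (E : Set G), MeasurableSet E →
      μ ((fun x => x * g) '' E) = (δ g : ℝ≥0∞) * μ E)
    (α : G →* (M ≃ₐ[ℂ] M)) (hαstar : ∀ (g : G) (x : M), α g (star x) = star (α g x))
    (hαcont : Continuous fun p : G × M => α p.1 p.2)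
    (π : M →⋆ₐ[ℂ] (H →L[ℂ] H))
    (X : G → M) (hXc : Continuous X) (hXs : HasCompactSupport X)
    (ξ η : G → H) (hξc : Continuous ξ) (hξs : HasCompactSupport ξ)
    (hηc : Continuous η) (hηs : HasCompactSupport η) :
    ∫ g, ⟪rhoRep μ α π (haagerupFlat δ α X) ξ g, η g⟫_ℂ ∂μ
      = ∫ g, ⟪ξ g, rhoRep μ α π X η g⟫_ℂ ∂μ := by
  classical
  letI : CStarAlgebra M := { }
  letI : CStarAlgebra (H →L[ℂ] H) := { }
  have hπc : Continuous π :=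
    AddMonoidHomClass.continuous_of_bound π 1
      (fun m => by simpa [one_mul] using NonUnitalStarAlgHom.norm_apply_le π m)
  have happ : Continuous fun p : (H →L[ℂ] H) × H => p.1 p.2 :=
    isBoundedBilinearMap_apply.continuous
  -- properties of the flat
  have hXflatc : Continuous (haagerupFlat δ α X) := by
    apply Continuous.smul
    · exact Complex.continuous_ofReal.comp (NNReal.continuous_coe.comp
        (hδcont.comp continuous_inv))
    · exact continuous_star.comp (hαcont.comp (continuous_inv.prodMk
        (hXc.comp continuous_inv)))
  have hXflats : HasCompactSupport (haagerupFlat δ α X) := by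
    apply HasCompactSupport.intro (hXs.inv : IsCompact (tsupport X)⁻¹)
    intro x hx
    have hx0 : X x⁻¹ = 0 := image_eq_zero_of_notMem_tsupport (by simpa [Set.mem_inv] using hx)
    simp [haagerupFlat, hx0]
  -- integrability of the kernels
  have hkerc : ∀ (Y : G → M), Continuous Y → ∀ (ζ : G → H), Continuous ζ → ∀ g : G,
      Continuous (fun h => π (α (g⁻¹ * h) (Y h)) (ζ (h⁻¹ * g))) := by
    intro Y hYc ζ hζc g
    exact happ.comp ((hπc.comp (hαcont.comp ((continuous_const.mul continuous_id).prodMk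
      hYc))).prodMk (hζc.comp (continuous_inv.mul continuous_const)))
  have hker : ∀ (Y : G → M), Continuous Y → HasCompactSupport Y → ∀ (ζ : G → H), Continuous ζ →
      ∀ g : G, Integrable (fun h => π (α (g⁻¹ * h) (Y h)) (ζ (h⁻¹ * g))) μ := by
    intro Y hYc hYs ζ hζc g
    apply Continuous.integrable_of_hasCompactSupport (hkerc Y hYc ζ hζc g)
    apply HasCompactSupport.intro hYs
    intro x hx
    simp [image_eq_zero_of_notMem_tsupport hx]
  -- inner product with an integral in the first slot
  have inner_left_integral : ∀ {f : G → H}, Integrable f μ → ∀ c : H,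
      ⟪∫ x, f x ∂μ, c⟫_ℂ = ∫ x, ⟪f x, c⟫_ℂ ∂μ := by
    intro f hf c
    rw [← inner_conj_symm (∫ x, f x ∂μ) c, ← integral_inner hf c, ← integral_conj]
    simp_rw [inner_conj_symm]
  -- Step A : pointwise identity for the flat kernel
  have stepA : ∀ g h : G, ⟪π (α (g⁻¹ * h) (haagerupFlat δ α X h)) (ξ (h⁻¹ * g)), η g⟫_ℂ
      = (((δ h⁻¹ : ℝ≥0) : ℝ) : ℂ) * ⟪ξ (h⁻¹ * g), π (α g⁻¹ (X h⁻¹)) (η g)⟫_ℂ := by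
    intro g h
    have h1 : α (g⁻¹ * h) (haagerupFlat δ α X h)
        = (((δ h⁻¹ : ℝ≥0) : ℝ) : ℂ) • star (α g⁻¹ (X h⁻¹)) := by
      have h3 : α (g⁻¹ * h) * α h⁻¹ = α g⁻¹ := by
        rw [← map_mul]; congr 1; group
      simp only [haagerupFlat, _root_.map_smul]
      congr 1
      rw [hαstar]
      congr 1
      rw [← AlgEquiv.mul_apply, h3]
    rw [h1, _root_.map_smul, map_star, ContinuousLinearMap.smul_apply, inner_smul_left,
      ContinuousLinearMap.star_eq_adjoint, ContinuousLinearMap.adjoint_inner_left]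
    simp [Complex.conj_ofReal]
  -- the two kernels Φ and Ψ
  set Φ : G → G → ℂ := fun g h => ⟪ξ (h * g), π (α g⁻¹ (X h)) (η g)⟫_ℂ with hΦ
  set Ψ : G → G → ℂ := fun g h => ⟪ξ g, π (α (g⁻¹ * h) (X h)) (η (h⁻¹ * g))⟫_ℂ with hΨ
  have hΦc : Continuous (Function.uncurry Φ) := by
    apply Continuous.inner
    · exact hξc.comp (continuous_snd.mul continuous_fst)
    · exact happ.comp ((hπc.comp (hαcont.comp (continuous_fst.inv.prodMk
        (hXc.comp continuous_snd)))).prodMk (hηc.comp continuous_fst))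
  have hΦs : HasCompactSupport (Function.uncurry Φ) := by
    apply HasCompactSupport.intro (hηs.prod hXs : IsCompact (tsupport η ×ˢ tsupport X))
    rintro ⟨g, h⟩ hgh
    rw [Set.mem_prod, not_and_or] at hgh
    rcases hgh with hg | hh
    · simp [Function.uncurry, hΦ, image_eq_zero_of_notMem_tsupport hg]
    · simp [Function.uncurry, hΦ, image_eq_zero_of_notMem_tsupport hh]
  have hΨc : Continuous (Function.uncurry Ψ) := by
    apply Continuous.inner
    · exact hξc.comp continuous_fst
    · exact happ.comp ((hπc.comp (hαcont.comp ((continuous_fst.inv.mul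
        continuous_snd).prodMk (hXc.comp continuous_snd)))).prodMk
        (hηc.comp (continuous_snd.inv.mul continuous_fst)))
  have hΨs : HasCompactSupport (Function.uncurry Ψ) := by
    apply HasCompactSupport.intro (hξs.prod hXs : IsCompact (tsupport ξ ×ˢ tsupport X))
    rintro ⟨g, h⟩ hgh
    rw [Set.mem_prod, not_and_or] at hgh
    rcases hgh with hg | hh
    · simp [Function.uncurry, hΨ, image_eq_zero_of_notMem_tsupport hg]
    · simp [Function.uncurry, hΨ, image_eq_zero_of_notMem_tsupport hh]
  calc ∫ g, ⟪rhoRep μ α π (haagerupFlat δ α X) ξ g, η g⟫_ℂ ∂μ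
      = ∫ g, ∫ h, ⟪π (α (g⁻¹ * h) (haagerupFlat δ α X h)) (ξ (h⁻¹ * g)), η g⟫_ℂ ∂μ ∂μ := by
        refine integral_congr_ae (Filter.Eventually.of_forall fun g => ?_)
        beta_reduce
        simp only [rhoRep]
        exact inner_left_integral (hker _ hXflatc hXflats ξ hξc g) (η g)
    _ = ∫ g, ∫ h, (((δ h⁻¹ : ℝ≥0) : ℝ) : ℂ) * Φ g h⁻¹ ∂μ ∂μ := by
        refine integral_congr_ae (Filter.Eventually.of_forall fun g => ?_)
        refine integral_congr_ae (Filter.Eventually.of_forall fun h => ?_)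
        beta_reduce
        rw [stepA g h]
    _ = ∫ g, ∫ h, Φ g h ∂μ ∂μ := by
        refine integral_congr_ae (Filter.Eventually.of_forall fun g => ?_)
        beta_reduce
        apply integral_inv_mul_modular_complex μ δ hδcont hδ
        · exact hΦc.comp (Continuous.prodMk_right g)
        · apply HasCompactSupport.intro hXs
          intro h hh
          simp [hΦ, image_eq_zero_of_notMem_tsupport hh]
    _ = ∫ h, ∫ g, Φ g h ∂μ ∂μ := integral_integral_swap_of_hasCompactSupport hΦc hΦs
    _ = ∫ h, ∫ g, Ψ g h ∂μ ∂μ := by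
        refine integral_congr_ae (Filter.Eventually.of_forall fun h => ?_)
        beta_reduce
        have h1 : ∫ g, Φ g h ∂μ = ∫ g, Φ (h⁻¹ * g) h ∂μ :=
          (integral_mul_left_eq_self (fun g => Φ g h) h⁻¹).symm
        rw [h1]
        refine integral_congr_ae (Filter.Eventually.of_forall fun g => ?_)
        beta_reduce
        simp only [hΦ, hΨ, mul_inv_rev, inv_inv]
        rw [show h * (h⁻¹ * g) = g by group]
    _ = ∫ g, ∫ h, Ψ g h ∂μ ∂μ :=
        (integral_integral_swap_of_hasCompactSupport hΨc hΨs).symm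
    _ = ∫ g, ⟪ξ g, rhoRep μ α π X η g⟫_ℂ ∂μ := by
        refine integral_congr_ae (Filter.Eventually.of_forall fun g => ?_)
        beta_reduce
        simp only [hΨ, rhoRep]
        exact integral_inner (hker X hXc hXs η hηc g) (ξ g)
end
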